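/- Let X : Ω → ℝⁿ be a zero-mean random vector that is sub-Gaussian with matrix variance proxy Σ ⪰ 0. Then for every symmetric positive definite matrix S ∈ ℝ^{n×n}, E[ exp( ‖X‖²_{(Σ+S)⁻¹} / 2 ) ] ≤ √( det(Σ + S) / det(S) ), where ‖x‖²_V := xᵀVx. -/

import Mathlib

open MeasureTheory Matrix

noncomputable section

/-- A random vector `X` with mean `μ` is sub-Gaussian with matrix variance proxy `S`
(`X ~ SG(μ, S)`): its moment generating function exists and
`E[exp(λᵀ(X − μ))] ≤ exp(λᵀ S λ / 2)` for all `λ ∈ ℝⁿ`. -/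
def IsSubGaussianMat {Ω : Type*} [MeasurableSpace Ω] {n : ℕ} (P : Measure Ω)
    (X : Ω → Fin n → ℝ) (μ : Fin n → ℝ) (S : Matrix (Fin n) (Fin n) ℝ) : Prop :=
  ∀ l : Fin n → ℝ,
    Integrable (fun ω => Real.exp (l ⬝ᵥ (X ω - μ))) P ∧
    ∫ ω, Real.exp (l ⬝ᵥ (X ω - μ)) ∂P ≤ Real.exp ((l ⬝ᵥ (S *ᵥ l)) / 2)


lemma gauss1d (v : ℝ) :
    Integrable (fun u : ℝ => Real.exp (v * u - u ^ 2 / 2)) ∧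
    ∫ u : ℝ, Real.exp (v * u - u ^ 2 / 2) = Real.sqrt (2 * Real.pi) * Real.exp (v ^ 2 / 2) := by
  have key : ∀ u : ℝ, v * u - u ^ 2 / 2 = v ^ 2 / 2 + -(1/2 * (u - v) ^ 2) := by
    intro u; ring
  have hint : Integrable (fun u : ℝ => Real.exp (-(1/2 * (u - v) ^ 2))) := by
    have := (integrable_exp_neg_mul_sq (by norm_num : (0:ℝ) < 1/2))
    simpa [neg_mul] using this.comp_sub_right v
  constructor
  · simp_rw [key, Real.exp_add]
    exact hint.const_mul _
  · simp_rw [key, Real.exp_add, integral_const_mul]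
    rw [integral_sub_right_eq_self (fun u : ℝ => Real.exp (-(1/2 * u ^ 2))) v]
    have : ∫ x : ℝ, Real.exp (-(1/2 * x ^ 2)) = Real.sqrt (Real.pi / (1/2)) := by
      simpa [neg_mul] using integral_gaussian (1/2 : ℝ)
    rw [this, mul_comm]
    norm_num [div_div_eq_mul_div]
    ring

lemma gaussN {n : ℕ} (v : Fin n → ℝ) :
    Integrable (fun u : Fin n → ℝ => Real.exp (v ⬝ᵥ u - u ⬝ᵥ u / 2)) ∧
    ∫ u : Fin n → ℝ, Real.exp (v ⬝ᵥ u - u ⬝ᵥ u / 2)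
      = Real.sqrt ((2 * Real.pi) ^ n) * Real.exp (v ⬝ᵥ v / 2) := by
  have key : ∀ u : Fin n → ℝ, Real.exp (v ⬝ᵥ u - u ⬝ᵥ u / 2)
      = ∏ i, Real.exp (v i * u i - (u i) ^ 2 / 2) := by
    intro u
    rw [← Real.exp_sum]
    congr 1
    simp only [dotProduct, Finset.sum_div, ← Finset.sum_sub_distrib]
    exact Finset.sum_congr rfl fun i _ => by ring
  constructor
  · simp_rw [key]
    exact Integrable.fintype_prod (fun i => (gauss1d (v i)).1)
  · simp_rw [key]
    rw [integral_fintype_prod_volume_eq_prod (ι := Fin n) (fun i (u : ℝ) => Real.exp (v i * u - u ^ 2 / 2))]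
    have : ∀ i, ∫ u : ℝ, Real.exp (v i * u - u ^ 2 / 2)
        = Real.sqrt (2 * Real.pi) * Real.exp ((v i) ^ 2 / 2) := fun i => (gauss1d (v i)).2
    simp_rw [this, Finset.prod_mul_distrib, Finset.prod_const, ← Real.exp_sum,
      Finset.card_univ, Fintype.card_fin]
    have hp : ∀ m : ℕ, Real.sqrt (2 * Real.pi) ^ m = Real.sqrt ((2 * Real.pi) ^ m) := by
      intro m
      induction m with
      | zero => simp
      | succ k ih => rw [pow_succ, pow_succ, ih, ← Real.sqrt_mul (by positivity)]
    rw [hp]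
    congr 1
    simp only [dotProduct, Finset.sum_div]
    exact congrArg Real.exp (Finset.sum_congr rfl fun i _ => by ring)

lemma matrix_cov {n : ℕ} (M : Matrix (Fin n) (Fin n) ℝ) (hM : M.det ≠ 0)
    (g : (Fin n → ℝ) → ℝ) :
    (Integrable g ↔ Integrable (fun u => g (M *ᵥ u))) ∧
    ∫ t, g t = |M.det| * ∫ u, g (M *ᵥ u) := by
  have hfun : (fun u => M *ᵥ u) = ⇑(Matrix.toLin' M) := by
    funext u; rw [Matrix.toLin'_apply]
  have hdet : LinearMap.det (Matrix.toLin' M) = M.det := LinearMap.det_toLin' M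
  have hmap : Measure.map (fun u => M *ᵥ u) volume
      = ENNReal.ofReal |M.det⁻¹| • volume := by
    rw [hfun, Real.map_linearMap_volume_pi_eq_smul_volume_pi (by rw [hdet]; exact hM), hdet]
  have hinv : Invertible M := M.invertibleOfIsUnitDet (isUnit_iff_ne_zero.mpr hM)
  have hemb : MeasurableEmbedding (fun u => M *ᵥ u) := by
    have := ((M.toLinearEquiv' hinv).toContinuousLinearEquiv.toHomeomorph).measurableEmbedding
    convert this using 1
    funext u; rfl
  constructor
  · rw [← Function.comp_def g, ← hemb.integrable_map_iff, hmap,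
      integrable_smul_measure (by simp [hM]) (by simp)]
  · have h1 : ∫ t, g t ∂(Measure.map (fun u => M *ᵥ u) volume) = ∫ u, g (M *ᵥ u) :=
      hemb.integral_map g
    rw [hmap, integral_smul_measure, ENNReal.toReal_ofReal (abs_nonneg _), abs_inv] at h1
    rw [← h1, smul_eq_mul, ← mul_assoc, mul_inv_cancel₀ (abs_ne_zero.mpr hM), one_mul]

lemma gaussA {n : ℕ} (A : Matrix (Fin n) (Fin n) ℝ) (hA : A.PosDef) (x : Fin n → ℝ) :
    Integrable (fun t : Fin n → ℝ => Real.exp (t ⬝ᵥ x - t ⬝ᵥ (A *ᵥ t) / 2)) ∧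
    ∫ t : Fin n → ℝ, Real.exp (t ⬝ᵥ x - t ⬝ᵥ (A *ᵥ t) / 2)
      = Real.sqrt ((2 * Real.pi) ^ n / A.det) * Real.exp (x ⬝ᵥ (A⁻¹ *ᵥ x) / 2) := by
  set B := (open scoped MatrixOrder in CFC.sqrt A) with hBdef
  have hB : B.PosSemidef := by
    open scoped MatrixOrder in exact Matrix.nonneg_iff_posSemidef.mp (CFC.sqrt_nonneg A)
  have hBB : B * B = A := by
    open scoped MatrixOrder in
    exact CFC.sqrt_mul_sqrt_self A (Matrix.nonneg_iff_posSemidef.mpr hA.posSemidef)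
  have hBsym : Bᵀ = B := by
    have := hB.1.eq
    simpa using this
  have detB2 : B.det * B.det = A.det := by rw [← det_mul, hBB]
  have hdetBnn : 0 ≤ B.det := by
    rw [hB.1.det_eq_prod_eigenvalues]
    exact Finset.prod_nonneg fun i _ => hB.eigenvalues_nonneg i
  have hdetB : B.det = Real.sqrt A.det := by
    rw [← detB2, Real.sqrt_mul_self hdetBnn]
  have hdetBne : B.det ≠ 0 := by
    intro h; rw [h, zero_mul] at detB2; exact (ne_of_gt hA.det_pos) detB2.symm
  have hdetBi : (B⁻¹).det ≠ 0 := by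
    simp only [det_nonsing_inv, Ring.inverse_eq_inv']
    exact inv_ne_zero hdetBne
  have hBisym : (B⁻¹)ᵀ = B⁻¹ := by rw [transpose_nonsing_inv, hBsym]
  have hAsym : Aᵀ = A := by
    have := hA.1.eq; simpa using this
  have hBiBi : B⁻¹ * B⁻¹ = A⁻¹ := by rw [← Matrix.mul_inv_rev, hBB]
  have hid : B⁻¹ * A * B⁻¹ = 1 := by
    rw [← hBB, ← Matrix.mul_assoc B⁻¹ B B, Matrix.nonsing_inv_mul B (isUnit_iff_ne_zero.mpr hdetBne),
      Matrix.one_mul, Matrix.mul_nonsing_inv B (isUnit_iff_ne_zero.mpr hdetBne)]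
  have key : ∀ u : Fin n → ℝ,
      Real.exp ((B⁻¹ *ᵥ u) ⬝ᵥ x - (B⁻¹ *ᵥ u) ⬝ᵥ (A *ᵥ (B⁻¹ *ᵥ u)) / 2)
      = Real.exp ((B⁻¹ *ᵥ x) ⬝ᵥ u - u ⬝ᵥ u / 2) := by
    intro u
    congr 1
    have e1 : (B⁻¹ *ᵥ u) ⬝ᵥ x = (B⁻¹ *ᵥ x) ⬝ᵥ u := by
      rw [dotProduct_comm, dotProduct_mulVec, ← mulVec_transpose, hBisym, dotProduct_comm,
        dotProduct_mulVec, ← mulVec_transpose, hBisym, dotProduct_comm]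
    have e2 : (B⁻¹ *ᵥ u) ⬝ᵥ (A *ᵥ (B⁻¹ *ᵥ u)) = u ⬝ᵥ u := by
      rw [mulVec_mulVec, dotProduct_mulVec, ← mulVec_transpose, transpose_mul, hBisym,
        hAsym, mulVec_mulVec, hid, one_mulVec]
    rw [e1, e2]
  have hvv : (B⁻¹ *ᵥ x) ⬝ᵥ (B⁻¹ *ᵥ x) = x ⬝ᵥ (A⁻¹ *ᵥ x) := by
    rw [dotProduct_mulVec, ← mulVec_transpose, hBisym, mulVec_mulVec, hBiBi, dotProduct_comm]
  obtain ⟨hcovi, hcov⟩ := matrix_cov (B⁻¹) hdetBi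
    (fun t => Real.exp (t ⬝ᵥ x - t ⬝ᵥ (A *ᵥ t) / 2))
  constructor
  · rw [hcovi]
    simp only [key]
    exact (gaussN (B⁻¹ *ᵥ x)).1
  · rw [hcov]
    simp only [key]
    rw [(gaussN (B⁻¹ *ᵥ x)).2, hvv]
    simp only [det_nonsing_inv, Ring.inverse_eq_inv', abs_inv, abs_of_nonneg hdetBnn, hdetB]
    rw [abs_of_nonneg (Real.sqrt_nonneg A.det),
      Real.sqrt_div (by positivity : (0:ℝ) ≤ (2 * Real.pi) ^ n), div_eq_mul_inv]
    ring

/-- Gaussian-smoothing moment bound. If `X` is zero-mean sub-Gaussian with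
matrix variance proxy `Σ ⪰ 0`, then for every symmetric positive definite `S`,
`E[exp(‖X‖²_{(Σ+S)⁻¹} / 2)] ≤ √(det(Σ+S)/det S)`. -/
theorem subGaussian_exp_quadratic_bound {Ω : Type*} [MeasurableSpace Ω] {n : ℕ}
    (P : Measure Ω) [IsProbabilityMeasure P]
    (X : Ω → Fin n → ℝ) (hX : Measurable X)
    (Sig : Matrix (Fin n) (Fin n) ℝ) (hSig : Sig.PosSemidef)
    (hsg : IsSubGaussianMat P X 0 Sig)
    (S : Matrix (Fin n) (Fin n) ℝ) (hS : S.PosDef) :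
    ∫⁻ ω, ENNReal.ofReal (Real.exp ((X ω ⬝ᵥ ((Sig + S)⁻¹ *ᵥ X ω)) / 2)) ∂P ≤
      ENNReal.ofReal (Real.sqrt ((Sig + S).det / S.det)) := by
  have hA : (Sig + S).PosDef := Matrix.PosDef.posSemidef_add hSig hS
  have hc : 0 < Real.sqrt ((2 * Real.pi) ^ n / (Sig + S).det) :=
    Real.sqrt_pos.mpr (div_pos (by positivity) hA.det_pos)
  set c := Real.sqrt ((2 * Real.pi) ^ n / (Sig + S).det) with hcdef
  have hpt : ∀ x : Fin n → ℝ, ENNReal.ofReal (Real.exp ((x ⬝ᵥ ((Sig + S)⁻¹ *ᵥ x)) / 2))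
      = ENNReal.ofReal c⁻¹ *
        ∫⁻ t : Fin n → ℝ, ENNReal.ofReal (Real.exp (t ⬝ᵥ x - t ⬝ᵥ ((Sig + S) *ᵥ t) / 2)) := by
    intro x
    rw [← ofReal_integral_eq_lintegral_ofReal (gaussA _ hA x).1
        (ae_of_all _ fun t => (Real.exp_pos _).le), (gaussA _ hA x).2,
      ← ENNReal.ofReal_mul (inv_nonneg.mpr hc.le), ← mul_assoc, ← hcdef,
      inv_mul_cancel₀ (ne_of_gt hc), one_mul]
  have h1 : Measurable fun p : Ω × (Fin n → ℝ) => p.2 ⬝ᵥ X p.1 := by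
    simp only [dotProduct]
    exact Finset.measurable_sum _ fun i _ =>
      ((measurable_pi_apply i).comp measurable_snd).mul
        (((measurable_pi_apply i).comp hX).comp measurable_fst)
  have hq : Measurable fun t : Fin n → ℝ => t ⬝ᵥ ((Sig + S) *ᵥ t) := by
    simp only [dotProduct, mulVec]
    exact Finset.measurable_sum _ fun i _ => (measurable_pi_apply i).mul
      (Finset.measurable_sum _ fun j _ => measurable_const.mul (measurable_pi_apply j))
  have hmeas : Measurable (Function.uncurry fun (ω : Ω) (t : Fin n → ℝ) =>
      ENNReal.ofReal (Real.exp (t ⬝ᵥ X ω - t ⬝ᵥ ((Sig + S) *ᵥ t) / 2))) :=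
    ENNReal.measurable_ofReal.comp (Real.measurable_exp.comp
      (h1.sub ((hq.comp measurable_snd).div_const 2)))
  have hb : ∀ t : Fin n → ℝ,
      ∫⁻ ω, ENNReal.ofReal (Real.exp (t ⬝ᵥ X ω - t ⬝ᵥ ((Sig + S) *ᵥ t) / 2)) ∂P
        ≤ ENNReal.ofReal (Real.exp (t ⬝ᵥ (0 : Fin n → ℝ) - t ⬝ᵥ (S *ᵥ t) / 2)) := by
    intro t
    have hsum : t ⬝ᵥ ((Sig + S) *ᵥ t) = t ⬝ᵥ (Sig *ᵥ t) + t ⬝ᵥ (S *ᵥ t) := by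
      rw [add_mulVec, dotProduct_add]
    simp_rw [sub_eq_add_neg, Real.exp_add,
      ENNReal.ofReal_mul (Real.exp_pos _).le]
    rw [lintegral_mul_const' _ _ ENNReal.ofReal_ne_top]
    have hint : Integrable (fun ω => Real.exp (t ⬝ᵥ X ω)) P := by
      simpa using (hsg t).1
    have hle : ∫ ω, Real.exp (t ⬝ᵥ X ω) ∂P ≤ Real.exp ((t ⬝ᵥ (Sig *ᵥ t)) / 2) := by
      simpa using (hsg t).2
    rw [← ofReal_integral_eq_lintegral_ofReal hint
      (ae_of_all _ fun ω => (Real.exp_pos _).le)]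
    calc ENNReal.ofReal (∫ ω, Real.exp (t ⬝ᵥ X ω) ∂P)
          * ENNReal.ofReal (Real.exp (-(t ⬝ᵥ ((Sig + S) *ᵥ t) / 2)))
        ≤ ENNReal.ofReal (Real.exp ((t ⬝ᵥ (Sig *ᵥ t)) / 2))
          * ENNReal.ofReal (Real.exp (-(t ⬝ᵥ ((Sig + S) *ᵥ t) / 2))) :=
          mul_le_mul_left (ENNReal.ofReal_le_ofReal hle) _
      _ = ENNReal.ofReal (Real.exp (t ⬝ᵥ (0 : Fin n → ℝ)))
          * ENNReal.ofReal (Real.exp (-(t ⬝ᵥ (S *ᵥ t) / 2))) := by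
          rw [← ENNReal.ofReal_mul (Real.exp_pos _).le,
            ← ENNReal.ofReal_mul (Real.exp_pos _).le, ← Real.exp_add, ← Real.exp_add]
          congr 2
          rw [hsum, dotProduct_zero]
          ring
  calc ∫⁻ ω, ENNReal.ofReal (Real.exp ((X ω ⬝ᵥ ((Sig + S)⁻¹ *ᵥ X ω)) / 2)) ∂P
      = ∫⁻ ω, (ENNReal.ofReal c⁻¹ *
          ∫⁻ t : Fin n → ℝ, ENNReal.ofReal (Real.exp (t ⬝ᵥ X ω - t ⬝ᵥ ((Sig + S) *ᵥ t) / 2))) ∂P :=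
        lintegral_congr fun ω => hpt (X ω)
    _ = ENNReal.ofReal c⁻¹ * ∫⁻ ω, (∫⁻ t : Fin n → ℝ,
          ENNReal.ofReal (Real.exp (t ⬝ᵥ X ω - t ⬝ᵥ ((Sig + S) *ᵥ t) / 2))) ∂P :=
        lintegral_const_mul' _ _ ENNReal.ofReal_ne_top
    _ = ENNReal.ofReal c⁻¹ * ∫⁻ t : Fin n → ℝ, ∫⁻ ω,
          ENNReal.ofReal (Real.exp (t ⬝ᵥ X ω - t ⬝ᵥ ((Sig + S) *ᵥ t) / 2)) ∂P := by
        rw [lintegral_lintegral_swap hmeas.aemeasurable]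
    _ ≤ ENNReal.ofReal c⁻¹ * ∫⁻ t : Fin n → ℝ,
          ENNReal.ofReal (Real.exp (t ⬝ᵥ (0 : Fin n → ℝ) - t ⬝ᵥ (S *ᵥ t) / 2)) := by
        exact mul_le_mul_right (lintegral_mono hb) _
    _ = ENNReal.ofReal c⁻¹ * ENNReal.ofReal (Real.sqrt ((2 * Real.pi) ^ n / S.det)) := by
        rw [← ofReal_integral_eq_lintegral_ofReal (gaussA S hS 0).1
          (ae_of_all _ fun t => (Real.exp_pos _).le), (gaussA S hS 0).2]
        simp
    _ = ENNReal.ofReal (Real.sqrt ((Sig + S).det / S.det)) := by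
        rw [← ENNReal.ofReal_mul (inv_nonneg.mpr hc.le)]
        congr 1
        rw [hcdef, ← Real.sqrt_inv, inv_div,
          ← Real.sqrt_mul (div_nonneg hA.det_pos.le (by positivity))]
        congr 1
        field_simp
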